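/- Fix p ≥ 1 and block sizes n : Fin p → ℕ with n k ≥ 1, let ι := Σ k, Fin (n k), let λ : Fin p → ℝ, let u ∈ M_ι(ℂ) be unitary, and set H := u · blockDiagonal'(fun k => (λ k : ℂ) • 1_{n k}) · u†. Let G := ∏_k U(n k) with its Haar probability measure μ, let ρ ∈ M_ι(ℂ), and define D(ρ) := ∫_G (u · blockDiagonal' V · u†) · ρ · (u · blockDiagonal' V · u†)† dμ(V). Then D(ρ) · H = H · D(ρ); that is, the gauge-averaged state commutes with the Hamiltonian. -/

import Mathlib

open MeasureTheory Matrix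

attribute [local instance] Matrix.normedAddCommGroup Matrix.normedSpace

noncomputable instance (m : ℕ) : MeasurableSpace (Matrix.unitaryGroup (Fin m) ℂ) := borel _
instance (m : ℕ) : BorelSpace (Matrix.unitaryGroup (Fin m) ℂ) := ⟨rfl⟩

/-- Conjugation by a unitary matrix, as a continuous linear equivalence. -/
noncomputable def conjCLE {N : Type*} [Fintype N] [DecidableEq N]
    (B : Matrix N N ℂ) (h1 : star B * B = 1) (h2 : B * star B = 1) :
    Matrix N N ℂ ≃L[ℂ] Matrix N N ℂ :=
  LinearEquiv.toContinuousLinearEquiv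
  { toFun := fun x => B * x * star B
    map_add' := by intro x y; noncomm_ring
    map_smul' := by intro c x; simp [Algebra.mul_smul_comm, Algebra.smul_mul_assoc]
    invFun := fun x => star B * x * B
    left_inv := fun x => by
      show star B * (B * x * star B) * B = x
      have h : star B * (B * x * star B) * B = (star B * B) * x * (star B * B) := by
        noncomm_ring
      rw [h, h1, one_mul, mul_one]
    right_inv := fun x => by
      show B * (star B * x * B) * star B = x
      have h : B * (star B * x * B) * star B = (B * star B) * x * (B * star B) := by
        noncomm_ring
      rw [h, h2, one_mul, mul_one] }

@[simp] lemma conjCLE_apply {N : Type*} [Fintype N] [DecidableEq N]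
    (B : Matrix N N ℂ) (h1 : star B * B = 1) (h2 : B * star B = 1) (x : Matrix N N ℂ) :
    conjCLE B h1 h2 x = B * x * star B := rfl

section Aux

variable {p : ℕ} {n : Fin p → ℕ}

/-- block diagonal of a tuple of unitaries -/
noncomputable def bdM (V : ∀ k, Matrix.unitaryGroup (Fin (n k)) ℂ) :
    Matrix (Σ k, Fin (n k)) (Σ k, Fin (n k)) ℂ :=
  Matrix.blockDiagonal' (fun k => (V k : Matrix (Fin (n k)) (Fin (n k)) ℂ))

lemma bdM_star_mul (V : ∀ k, Matrix.unitaryGroup (Fin (n k)) ℂ) :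
    star (bdM V) * bdM V = 1 := by
  unfold bdM
  rw [Matrix.star_eq_conjTranspose, Matrix.blockDiagonal'_conjTranspose,
    ← Matrix.blockDiagonal'_mul]
  have h : (fun k => ((V k : Matrix (Fin (n k)) (Fin (n k)) ℂ))ᴴ
        * ((V k : Matrix (Fin (n k)) (Fin (n k)) ℂ)))
      = (1 : ∀ k, Matrix (Fin (n k)) (Fin (n k)) ℂ) := by
    funext k
    exact (Unitary.mem_iff.mp (V k).2).1
  rw [h, Matrix.blockDiagonal'_one]

lemma bdM_mul_star (V : ∀ k, Matrix.unitaryGroup (Fin (n k)) ℂ) :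
    bdM V * star (bdM V) = 1 := by
  unfold bdM
  rw [Matrix.star_eq_conjTranspose, Matrix.blockDiagonal'_conjTranspose,
    ← Matrix.blockDiagonal'_mul]
  have h : (fun k => ((V k : Matrix (Fin (n k)) (Fin (n k)) ℂ))
        * ((V k : Matrix (Fin (n k)) (Fin (n k)) ℂ))ᴴ)
      = (1 : ∀ k, Matrix (Fin (n k)) (Fin (n k)) ℂ) := by
    funext k
    exact (Unitary.mem_iff.mp (V k).2).2
  rw [h, Matrix.blockDiagonal'_one]

lemma bdM_mul (W V : ∀ k, Matrix.unitaryGroup (Fin (n k)) ℂ) :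
    bdM (W * V) = bdM W * bdM V := by
  unfold bdM
  rw [← Matrix.blockDiagonal'_mul]
  rfl

/-- gauge unitary -/
noncomputable def AM (u : Matrix (Σ k, Fin (n k)) (Σ k, Fin (n k)) ℂ)
    (V : ∀ k, Matrix.unitaryGroup (Fin (n k)) ℂ) :
    Matrix (Σ k, Fin (n k)) (Σ k, Fin (n k)) ℂ :=
  u * bdM V * star u

lemma AM_star (u : Matrix (Σ k, Fin (n k)) (Σ k, Fin (n k)) ℂ)
    (V : ∀ k, Matrix.unitaryGroup (Fin (n k)) ℂ) :
    star (AM u V) = u * star (bdM V) * star u := by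
  unfold AM
  simp only [StarMul.star_mul, star_star, mul_assoc]

lemma AM_star_mul {u : Matrix (Σ k, Fin (n k)) (Σ k, Fin (n k)) ℂ}
    (hu1 : star u * u = 1) (hu2 : u * star u = 1)
    (V : ∀ k, Matrix.unitaryGroup (Fin (n k)) ℂ) :
    star (AM u V) * AM u V = 1 := by
  rw [AM_star]
  unfold AM
  have h : u * star (bdM V) * star u * (u * bdM V * star u)
      = u * (star (bdM V) * (star u * u) * bdM V) * star u := by noncomm_ring
  rw [h, hu1, mul_one, bdM_star_mul, mul_one, hu2]

lemma AM_mul_star {u : Matrix (Σ k, Fin (n k)) (Σ k, Fin (n k)) ℂ}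
    (hu1 : star u * u = 1) (hu2 : u * star u = 1)
    (V : ∀ k, Matrix.unitaryGroup (Fin (n k)) ℂ) :
    AM u V * star (AM u V) = 1 := by
  rw [AM_star]
  unfold AM
  have h : u * bdM V * star u * (u * star (bdM V) * star u)
      = u * (bdM V * (star u * u) * star (bdM V)) * star u := by noncomm_ring
  rw [h, hu1, mul_one, bdM_mul_star, mul_one, hu2]

lemma AM_mul {u : Matrix (Σ k, Fin (n k)) (Σ k, Fin (n k)) ℂ}
    (hu1 : star u * u = 1)
    (W V : ∀ k, Matrix.unitaryGroup (Fin (n k)) ℂ) :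
    AM u (W * V) = AM u W * AM u V := by
  unfold AM
  rw [bdM_mul]
  have h : u * bdM W * star u * (u * bdM V * star u)
      = u * (bdM W * (star u * u) * bdM V) * star u := by noncomm_ring
  rw [h, hu1, mul_one]

/-- integrand of the gauge average -/
noncomputable def FM (u ρ : Matrix (Σ k, Fin (n k)) (Σ k, Fin (n k)) ℂ)
    (V : ∀ k, Matrix.unitaryGroup (Fin (n k)) ℂ) :
    Matrix (Σ k, Fin (n k)) (Σ k, Fin (n k)) ℂ :=
  AM u V * ρ * star (AM u V)

lemma FM_mul_left {u : Matrix (Σ k, Fin (n k)) (Σ k, Fin (n k)) ℂ}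
    (hu1 : star u * u = 1) (ρ : Matrix (Σ k, Fin (n k)) (Σ k, Fin (n k)) ℂ)
    (W V : ∀ k, Matrix.unitaryGroup (Fin (n k)) ℂ) :
    FM u ρ (W * V) = AM u W * FM u ρ V * star (AM u W) := by
  unfold FM
  rw [AM_mul hu1, StarMul.star_mul]
  noncomm_ring

end Aux

/-- For the Hamiltonian `H = u (⊕ₖ λₖ 1_{n k}) u†` and the gauge average
`D(ρ) = ∫_{𝒢_T} (u V u†) ρ (u V u†)† dμ(V)` over the thermodynamic group `𝒢_T = ∏ₖ U(n k)`
with its Haar probability measure, the gauge-averaged state commutes with the Hamiltonian: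
`D(ρ) H = H D(ρ)`. -/
theorem gauge_average_commutes_with_hamiltonian (p : ℕ) (hp : 1 ≤ p)
    (n : Fin p → ℕ) (hn : ∀ k, 1 ≤ n k) (lam : Fin p → ℝ)
    (u : Matrix (Σ k, Fin (n k)) (Σ k, Fin (n k)) ℂ)
    (hu : u ∈ Matrix.unitaryGroup (Σ k, Fin (n k)) ℂ)
    (μ : Measure (∀ k, Matrix.unitaryGroup (Fin (n k)) ℂ))
    [μ.IsHaarMeasure] [IsProbabilityMeasure μ]
    (ρ : Matrix (Σ k, Fin (n k)) (Σ k, Fin (n k)) ℂ) :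
    (∫ V : ∀ k, Matrix.unitaryGroup (Fin (n k)) ℂ,
        (u * Matrix.blockDiagonal' (fun k => (V k : Matrix (Fin (n k)) (Fin (n k)) ℂ)) * star u)
          * ρ *
          star (u * Matrix.blockDiagonal'
            (fun k => (V k : Matrix (Fin (n k)) (Fin (n k)) ℂ)) * star u) ∂μ) *
        (u * Matrix.blockDiagonal'
          (fun k => (lam k : ℂ) • (1 : Matrix (Fin (n k)) (Fin (n k)) ℂ)) * star u)
      = (u * Matrix.blockDiagonal'
          (fun k => (lam k : ℂ) • (1 : Matrix (Fin (n k)) (Fin (n k)) ℂ)) * star u) *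
        (∫ V : ∀ k, Matrix.unitaryGroup (Fin (n k)) ℂ,
          (u * Matrix.blockDiagonal' (fun k => (V k : Matrix (Fin (n k)) (Fin (n k)) ℂ)) * star u)
            * ρ *
            star (u * Matrix.blockDiagonal'
              (fun k => (V k : Matrix (Fin (n k)) (Fin (n k)) ℂ)) * star u) ∂μ) := by
  classical
  have hu1 : star u * u = 1 := (Unitary.mem_iff.mp hu).1
  have hu2 : u * star u = 1 := (Unitary.mem_iff.mp hu).2
  have hfun : (fun V : ∀ k, Matrix.unitaryGroup (Fin (n k)) ℂ =>
        (u * Matrix.blockDiagonal' (fun k => (V k : Matrix (Fin (n k)) (Fin (n k)) ℂ)) * star u)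
          * ρ *
          star (u * Matrix.blockDiagonal'
            (fun k => (V k : Matrix (Fin (n k)) (Fin (n k)) ℂ)) * star u))
      = fun V => FM u ρ V := rfl
  rw [show (∫ V : ∀ k, Matrix.unitaryGroup (Fin (n k)) ℂ,
        (u * Matrix.blockDiagonal' (fun k => (V k : Matrix (Fin (n k)) (Fin (n k)) ℂ)) * star u)
          * ρ *
          star (u * Matrix.blockDiagonal'
            (fun k => (V k : Matrix (Fin (n k)) (Fin (n k)) ℂ)) * star u) ∂μ)
      = ∫ V, FM u ρ V ∂μ from congrArg (fun f => ∫ V, f V ∂μ) hfun]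
  set D := ∫ V, FM u ρ V ∂μ with hD
  -- the gauge average commutes with every gauge unitary
  have key : ∀ W : ∀ k, Matrix.unitaryGroup (Fin (n k)) ℂ, AM u W * D = D * AM u W := by
    intro W
    have hsub : ∫ V, FM u ρ (W * V) ∂μ = D := integral_mul_left_eq_self (FM u ρ) W
    have hpull : ∫ V, AM u W * FM u ρ V * star (AM u W) ∂μ = AM u W * D * star (AM u W) := by
      have := (conjCLE (AM u W) (AM_star_mul hu1 hu2 W) (AM_mul_star hu1 hu2 W)).integral_comp_comm
        (μ := μ) (FM u ρ)
      exact this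
    have hptw : (fun V => FM u ρ (W * V))
        = fun V => AM u W * FM u ρ V * star (AM u W) := funext (FM_mul_left hu1 ρ W)
    have hfix : D = AM u W * D * star (AM u W) := by
      conv_lhs => rw [← hsub, hptw]
      exact hpull
    have h2 : AM u W * (D * (star (AM u W) * AM u W))
        = (AM u W * D * star (AM u W)) * AM u W := by
      rw [← mul_assoc D (star (AM u W)) (AM u W),
        ← mul_assoc (AM u W) (D * star (AM u W)) (AM u W),
        ← mul_assoc (AM u W) D (star (AM u W))]
    calc AM u W * D = AM u W * (D * (star (AM u W) * AM u W)) := by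
          rw [AM_star_mul hu1 hu2, mul_one]
      _ = (AM u W * D * star (AM u W)) * AM u W := h2
      _ = D * AM u W := by rw [← hfix]
  -- decompose the block-scalar Hamiltonian core into two unitaries
  set M : ℝ := 1 + ∑ j, |lam j| with hM
  have hM_pos : 0 < M := by
    have : (0:ℝ) ≤ ∑ j, |lam j| := Finset.sum_nonneg fun j _ => abs_nonneg _
    linarith
  have habs : ∀ k, |lam k| ≤ M := by
    intro k
    have h1 : |lam k| ≤ ∑ j, |lam j| :=
      Finset.single_le_sum (f := fun j => |lam j|) (fun j _ => abs_nonneg _) (Finset.mem_univ k)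
    linarith
  set c : Fin p → ℝ := fun k => lam k / M with hc
  set s : Fin p → ℝ := fun k => Real.sqrt (1 - (c k)^2) with hs
  have hc_sq : ∀ k, (c k)^2 ≤ 1 := by
    intro k
    have : |c k| ≤ 1 := by
      rw [hc]
      simp only
      rw [abs_div, abs_of_pos hM_pos, div_le_one hM_pos]
      exact habs k
    calc (c k)^2 = |c k|^2 := (sq_abs _).symm
      _ ≤ 1^2 := by nlinarith [abs_nonneg (c k)]
      _ = 1 := one_pow 2
  set z : Fin p → ℂ := fun k => (c k : ℂ) + (s k : ℝ) * Complex.I with hz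
  have hz_conj : ∀ k, z k * (starRingEnd ℂ) (z k) = 1 := by
    intro k
    rw [Complex.mul_conj, hz]
    norm_cast
    rw [Complex.normSq_add_mul_I]
    have : (s k)^2 = 1 - (c k)^2 := Real.sq_sqrt (by linarith [hc_sq k])
    rw [this]
    ring
  have hz_add : ∀ k, z k + (starRingEnd ℂ) (z k) = 2 * (c k : ℂ) := by
    intro k
    rw [Complex.add_conj]
    norm_cast
    simp [hz]
  -- the two unitary tuples
  have hWmem : ∀ (w : Fin p → ℂ) (hw : ∀ k, w k * (starRingEnd ℂ) (w k) = 1) (k : Fin p),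
      (w k) • (1 : Matrix (Fin (n k)) (Fin (n k)) ℂ) ∈ Matrix.unitaryGroup (Fin (n k)) ℂ := by
    intro w hw k
    rw [Matrix.mem_unitaryGroup_iff]
    have : star ((w k) • (1 : Matrix (Fin (n k)) (Fin (n k)) ℂ))
        = (starRingEnd ℂ) (w k) • (1 : Matrix (Fin (n k)) (Fin (n k)) ℂ) := by
      simp [star_smul]
    rw [this, smul_mul_smul_comm, mul_one, hw k, one_smul]
  have hzc : ∀ k, (starRingEnd ℂ) (z k) * (starRingEnd ℂ) ((starRingEnd ℂ) (z k)) = 1 := by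
    intro k
    rw [Complex.conj_conj, mul_comm]
    exact hz_conj k
  set W₁ : ∀ k, Matrix.unitaryGroup (Fin (n k)) ℂ :=
    fun k => ⟨(z k) • 1, hWmem z hz_conj k⟩ with hW₁
  set W₂ : ∀ k, Matrix.unitaryGroup (Fin (n k)) ℂ :=
    fun k => ⟨((starRingEnd ℂ) (z k)) • 1, hWmem _ hzc k⟩ with hW₂
  have hΛ : Matrix.blockDiagonal'
      (fun k => (lam k : ℂ) • (1 : Matrix (Fin (n k)) (Fin (n k)) ℂ))
      = ((M/2 : ℝ) : ℂ) • (bdM W₁ + bdM W₂) := by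
    unfold bdM
    rw [← Matrix.blockDiagonal'_add, ← Matrix.blockDiagonal'_smul]
    refine congrArg Matrix.blockDiagonal' (funext fun k => ?_)
    simp only [Pi.smul_apply, Pi.add_apply]
    rw [← add_smul, smul_smul, hz_add k]
    congr 1
    rw [hc]
    simp only
    have hM0 : ((1 + ∑ j : Fin p, |lam j| : ℝ) : ℂ) ≠ 0 := by
      have h0 : (0:ℝ) < 1 + ∑ j : Fin p, |lam j| := hM_pos
      exact_mod_cast h0.ne'
    push_cast
    field_simp
    have hM' : (M:ℂ) ≠ 0 := by exact_mod_cast hM_pos.ne'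
    rw [mul_div_cancel_right₀ _ hM']
  -- conclude
  have hH : u * Matrix.blockDiagonal'
      (fun k => (lam k : ℂ) • (1 : Matrix (Fin (n k)) (Fin (n k)) ℂ)) * star u
      = ((M/2 : ℝ) : ℂ) • (AM u W₁ + AM u W₂) := by
    rw [hΛ, mul_smul_comm, smul_mul_assoc]
    congr 1
    unfold AM
    noncomm_ring
  rw [hH, mul_smul_comm, smul_mul_assoc, mul_add, add_mul, key W₁, key W₂]
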